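/- Let q(x) = ½xᵀQx + cᵀx + α with Q ∈ ℝⁿˣⁿ symmetric, and let P = {x ∈ ℝⁿ : Ax ≥ b} be a polyhedron. For x̄ ∈ P the following are equivalent: (a1) x̄ is a stationary point of q on P and Q is strictly copositive on the critical cone C(x̄;q;P); (a2) x̄ is a stationary point of q on P, Q is copositive on C(x̄;q;P), and the only v with C(x̄;q;P) ∋ v ⟂ Qv ∈ C(x̄;q;P)* is v = 0 (where C* is the dual cone and ⟂ means vᵀQv = 0); (a3) x̄ is both a local minimizer of q on P and an isolated stationary point; (a4) x̄ is an isolated local minimizer of q on P; (a5) x̄ is a strict local minimizer of q on P; (a6) x̄ is a strong local minimizer of q on P. -/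

import Mathlib

open Filter Topology Set

noncomputable section

/-- Euclidean norm on `Fin n → ℝ`. -/
def n2 {n : ℕ} (v : Fin n → ℝ) : ℝ := Real.sqrt (∑ i, v i ^ 2)

/-- The tangent cone of `S` at `x`. -/
def TangentCone {n : ℕ} (S : Set (Fin n → ℝ)) (x : Fin n → ℝ) : Set (Fin n → ℝ) :=
  {v | ∃ (xs : ℕ → Fin n → ℝ) (τ : ℕ → ℝ),
    (∀ k, xs k ∈ S) ∧ Tendsto xs atTop (𝓝 x) ∧
    (∀ k, 0 < τ k) ∧ Tendsto τ atTop (𝓝 (0:ℝ)) ∧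
    Tendsto (fun k => (τ k)⁻¹ • (xs k - x)) atTop (𝓝 v)}

/-- Local minimizer of `f` on `X`. -/
def IsLocMin' {n : ℕ} (f : (Fin n → ℝ) → ℝ) (X : Set (Fin n → ℝ)) (xbar : Fin n → ℝ) : Prop :=
  xbar ∈ X ∧ ∃ ε > (0:ℝ), ∀ y ∈ X, n2 (y - xbar) < ε → f xbar ≤ f y

/-- Strict local minimizer of `f` on `X`. -/
def IsStrictLocMin {n : ℕ} (f : (Fin n → ℝ) → ℝ) (X : Set (Fin n → ℝ)) (xbar : Fin n → ℝ) : Prop :=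
  xbar ∈ X ∧ ∃ ε > (0:ℝ), ∀ y ∈ X, n2 (y - xbar) < ε → y ≠ xbar → f xbar < f y

/-- Strong local minimizer of `f` on `X`. -/
def IsStrongLocMin {n : ℕ} (f : (Fin n → ℝ) → ℝ) (X : Set (Fin n → ℝ)) (xbar : Fin n → ℝ) : Prop :=
  xbar ∈ X ∧ ∃ c > (0:ℝ), ∃ ε > (0:ℝ), ∀ y ∈ X, n2 (y - xbar) < ε →
    f xbar + c * n2 (y - xbar) ^ 2 ≤ f y

/-- Isolated local minimizer of `f` on `X`: the only local minimizer in a neighborhood. -/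
def IsIsolatedLocMin {n : ℕ} (f : (Fin n → ℝ) → ℝ) (X : Set (Fin n → ℝ)) (xbar : Fin n → ℝ) : Prop :=
  IsLocMin' f X xbar ∧ ∃ ε > (0:ℝ), ∀ y, IsLocMin' f X y → n2 (y - xbar) < ε → y = xbar

/-- The quadratic function `q(x) = ½ xᵀQx + cᵀx + α`. -/
def quadF {n : ℕ} (Q : Matrix (Fin n) (Fin n) ℝ) (c : Fin n → ℝ) (α : ℝ)
    (x : Fin n → ℝ) : ℝ :=
  (1/2) * (∑ i, ∑ j, Q i j * x i * x j) + (∑ i, c i * x i) + α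

/-- The gradient `∇q(x) = Qx + c` (for symmetric `Q`). -/
def gradQ {n : ℕ} (Q : Matrix (Fin n) (Fin n) ℝ) (c : Fin n → ℝ) (x : Fin n → ℝ) :
    Fin n → ℝ :=
  fun i => (∑ j, Q i j * x j) + c i

/-- Stationary point of the QP `min_{x∈P} q(x)`: `∇q(y)ᵀ(x − y) ≥ 0` for all `x ∈ P`. -/
def IsStatQ {n : ℕ} (Q : Matrix (Fin n) (Fin n) ℝ) (c : Fin n → ℝ)
    (P : Set (Fin n → ℝ)) (y : Fin n → ℝ) : Prop :=
  y ∈ P ∧ ∀ x ∈ P, 0 ≤ ∑ i, gradQ Q c y i * (x i - y i)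

abbrev Euc (n : ℕ) := EuclideanSpace ℝ (Fin n)

lemma n2_eq_norm {n : ℕ} (v : Fin n → ℝ) : n2 v = @norm (Euc n) _ (WithLp.toLp 2 v) := by
  rw [EuclideanSpace.norm_eq]; simp [n2, sq_abs]

lemma n2_nonneg {n : ℕ} (v : Fin n → ℝ) : 0 ≤ n2 v := Real.sqrt_nonneg _

lemma n2_eq_zero {n : ℕ} {v : Fin n → ℝ} (h : n2 v = 0) : v = 0 := by
  rw [n2_eq_norm] at h
  have h' := (@norm_eq_zero (Euc n) _ (WithLp.toLp 2 v)).mp h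
  simpa using congrArg WithLp.ofLp h'

lemma n2_pos {n : ℕ} {v : Fin n → ℝ} (h : v ≠ 0) : 0 < n2 v :=
  lt_of_le_of_ne (n2_nonneg v) (fun h' => h (n2_eq_zero h'.symm))

lemma n2_smul {n : ℕ} (t : ℝ) (v : Fin n → ℝ) : n2 (t • v) = |t| * n2 v := by
  rw [n2_eq_norm, n2_eq_norm]
  rw [WithLp.toLp_smul, norm_smul, Real.norm_eq_abs]

lemma n2_sub_le {n : ℕ} (a b c : Fin n → ℝ) : n2 (a - c) ≤ n2 (a - b) + n2 (b - c) := by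
  rw [n2_eq_norm, n2_eq_norm, n2_eq_norm]
  rw [WithLp.toLp_sub, WithLp.toLp_sub, WithLp.toLp_sub]
  exact @norm_sub_le_norm_sub_add_norm_sub (Euc n) _ (WithLp.toLp 2 a) (WithLp.toLp 2 b) (WithLp.toLp 2 c)

lemma abs_coord_le_n2 {n : ℕ} (v : Fin n → ℝ) (i : Fin n) : |v i| ≤ n2 v := by
  rw [n2, ← Real.sqrt_sq_eq_abs]
  apply Real.sqrt_le_sqrt
  exact Finset.single_le_sum (fun j _ => sq_nonneg (v j)) (Finset.mem_univ i)

lemma tendsto_of_n2 {n : ℕ} {f : ℕ → Fin n → ℝ} {x : Fin n → ℝ}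
    (h : Tendsto (fun k => n2 (f k - x)) atTop (𝓝 0)) : Tendsto f atTop (𝓝 x) := by
  rw [tendsto_pi_nhds]
  intro i
  rw [tendsto_iff_dist_tendsto_zero]
  apply squeeze_zero (fun k => dist_nonneg) (fun k => ?_) h
  rw [Real.dist_eq]
  exact abs_coord_le_n2 (f k - x) i

lemma tendsto_of_eucl {n : ℕ} {f : ℕ → Fin n → ℝ} {x : Fin n → ℝ}
    (h : @Tendsto ℕ (Euc n) (fun k => WithLp.toLp 2 (f k)) atTop (@nhds (Euc n) _ (WithLp.toLp 2 x))) : Tendsto f atTop (𝓝 x) := by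
  apply tendsto_of_n2
  have h2 := (tendsto_iff_norm_sub_tendsto_zero (E := Euc n)).mp h
  convert h2 using 2 with k
  rw [n2_eq_norm, WithLp.toLp_sub]

lemma tendsto_dot {n : ℕ} (a : Fin n → ℝ) {f : ℕ → Fin n → ℝ} {x : Fin n → ℝ}
    (h : Tendsto f atTop (𝓝 x)) :
    Tendsto (fun k => ∑ i, a i * f k i) atTop (𝓝 (∑ i, a i * x i)) := by
  rw [tendsto_pi_nhds] at h
  exact tendsto_finset_sum _ (fun i _ => (tendsto_const_nhds).mul (h i))

lemma tendsto_qf {n : ℕ} (Q : Matrix (Fin n) (Fin n) ℝ) {f : ℕ → Fin n → ℝ} {x : Fin n → ℝ}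
    (h : Tendsto f atTop (𝓝 x)) :
    Tendsto (fun k => ∑ i, ∑ j, Q i j * f k i * f k j) atTop
      (𝓝 (∑ i, ∑ j, Q i j * x i * x j)) := by
  rw [tendsto_pi_nhds] at h
  exact tendsto_finset_sum _ (fun i _ => tendsto_finset_sum _
    (fun j _ => ((tendsto_const_nhds.mul (h i)).mul (h j))))

lemma exists_subseq {n : ℕ} {f : ℕ → Fin n → ℝ} (hf : ∀ k, n2 (f k) = 1) :
    ∃ (v : Fin n → ℝ) (φ : ℕ → ℕ), StrictMono φ ∧ n2 v = 1 ∧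
      Tendsto (f ∘ φ) atTop (𝓝 v) := by
  have hc : IsCompact (Metric.sphere (0 : Euc n) 1) := isCompact_sphere _ _
  have hmem : ∀ k, (WithLp.toLp 2 (f k) : Euc n) ∈ Metric.sphere (0 : Euc n) 1 := by
    intro k
    exact mem_sphere_zero_iff_norm.mpr (by rw [← n2_eq_norm]; exact hf k)
  obtain ⟨v, hv, φ, hφ, hlim⟩ := hc.tendsto_subseq hmem
  refine ⟨WithLp.ofLp v, φ, hφ, ?_, tendsto_of_eucl hlim⟩
  rw [n2_eq_norm]
  exact mem_sphere_zero_iff_norm.mp hv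

def dotp {n : ℕ} (v w : Fin n → ℝ) : ℝ := ∑ i, v i * w i

def QF {n : ℕ} (Q : Matrix (Fin n) (Fin n) ℝ) (v : Fin n → ℝ) : ℝ :=
  ∑ i, ∑ j, Q i j * v i * v j

variable {n m : ℕ}

lemma sum_swap_sym {Q : Matrix (Fin n) (Fin n) ℝ} (hQ : ∀ i j, Q i j = Q j i)
    (a b : Fin n → ℝ) :
    ∑ i, ∑ j, Q i j * a i * b j = ∑ i, ∑ j, Q i j * b i * a j := by
  rw [Finset.sum_comm]
  apply Finset.sum_congr rfl; intro j _
  apply Finset.sum_congr rfl; intro i _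
  rw [hQ i j]; ring

lemma quad_taylor {Q : Matrix (Fin n) (Fin n) ℝ} (hQ : ∀ i j, Q i j = Q j i)
    (c : Fin n → ℝ) (α : ℝ) (x d : Fin n → ℝ) :
    quadF Q c α (x + d) = quadF Q c α x + dotp (gradQ Q c x) d + (1/2) * QF Q d := by
  have e1 : ∀ i j : Fin n, Q i j * (x i + d i) * (x j + d j) =
      Q i j * x i * x j + Q i j * x i * d j + (Q i j * d i * x j + Q i j * d i * d j) := by
    intros; ring
  have e2 : ∑ i, ∑ j, Q i j * x i * d j = ∑ i, ∑ j, Q i j * d i * x j :=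
    sum_swap_sym hQ x d
  have e3 : ∀ i : Fin n, c i * (x i + d i) = c i * x i + c i * d i := by intros; ring
  have e4 : dotp (gradQ Q c x) d
      = (∑ i, ∑ j, Q i j * d i * x j) + ∑ i, c i * d i := by
    rw [dotp]
    rw [← Finset.sum_add_distrib]
    apply Finset.sum_congr rfl; intro i _
    rw [gradQ, add_mul, Finset.sum_mul]
    congr 1
    apply Finset.sum_congr rfl; intro j _; ring
  simp only [quadF, QF, Pi.add_apply, e1, e3, Finset.sum_add_distrib, e4]
  rw [e2]; ring

lemma quad_ray {Q : Matrix (Fin n) (Fin n) ℝ} (hQ : ∀ i j, Q i j = Q j i)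
    (c : Fin n → ℝ) (α : ℝ) (x v : Fin n → ℝ) (t : ℝ) :
    quadF Q c α (x + t • v)
      = quadF Q c α x + t * dotp (gradQ Q c x) v + (t^2/2) * QF Q v := by
  rw [quad_taylor hQ c α x (t • v)]
  have h1 : dotp (gradQ Q c x) (t • v) = t * dotp (gradQ Q c x) v := by
    simp only [dotp, Pi.smul_apply, smul_eq_mul, Finset.mul_sum]
    apply Finset.sum_congr rfl; intros; ring
  have h2 : QF Q (t • v) = t^2 * QF Q v := by
    rw [QF, QF, Finset.mul_sum]
    apply Finset.sum_congr rfl; intro i _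
    rw [Finset.mul_sum]
    apply Finset.sum_congr rfl; intros
    simp only [Pi.smul_apply, smul_eq_mul]; ring
  rw [h1, h2]; ring

lemma QF_eq_dot {Q : Matrix (Fin n) (Fin n) ℝ} (v : Fin n → ℝ) :
    ∑ i, v i * (∑ j, Q i j * v j) = QF Q v := by
  rw [QF]
  apply Finset.sum_congr rfl; intro i _
  rw [Finset.mul_sum]
  apply Finset.sum_congr rfl; intros; ring

lemma QF_add {Q : Matrix (Fin n) (Fin n) ℝ} (hQ : ∀ i j, Q i j = Q j i) (a b : Fin n → ℝ) :
    QF Q (a + b) = QF Q a + 2 * (∑ i, ∑ j, Q i j * a i * b j) + QF Q b := by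
  have e1 : ∀ i j : Fin n, Q i j * (a i + b i) * (a j + b j) =
      Q i j * a i * a j + Q i j * a i * b j + (Q i j * b i * a j + Q i j * b i * b j) := by
    intros; ring
  simp only [QF, Pi.add_apply, e1, Finset.sum_add_distrib]
  rw [sum_swap_sym hQ b a]; ring

lemma abs_dotp_le (a v : Fin n → ℝ) : |dotp a v| ≤ (∑ i, |a i|) * n2 v := by
  rw [dotp]
  calc |∑ i, a i * v i| ≤ ∑ i, |a i * v i| := Finset.abs_sum_le_sum_abs _ _
    _ ≤ ∑ i, |a i| * n2 v := by
        apply Finset.sum_le_sum; intro i _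
        rw [abs_mul]
        exact mul_le_mul_of_nonneg_left (abs_coord_le_n2 v i) (abs_nonneg _)
    _ = (∑ i, |a i|) * n2 v := by rw [← Finset.sum_mul]

lemma abs_QF_le (Q : Matrix (Fin n) (Fin n) ℝ) (v : Fin n → ℝ) :
    |QF Q v| ≤ (∑ i, ∑ j, |Q i j|) * n2 v ^ 2 := by
  rw [QF]
  calc |∑ i, ∑ j, Q i j * v i * v j| ≤ ∑ i, |∑ j, Q i j * v i * v j| :=
        Finset.abs_sum_le_sum_abs _ _
    _ ≤ ∑ i, ∑ j, |Q i j * v i * v j| :=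
        Finset.sum_le_sum (fun i _ => Finset.abs_sum_le_sum_abs _ _)
    _ ≤ ∑ i, ∑ j, |Q i j| * n2 v ^ 2 := by
        apply Finset.sum_le_sum; intro i _
        apply Finset.sum_le_sum; intro j _
        rw [abs_mul, abs_mul, sq, ← mul_assoc]
        exact mul_le_mul (mul_le_mul_of_nonneg_left (abs_coord_le_n2 v i) (abs_nonneg _))
          (abs_coord_le_n2 v j) (abs_nonneg _) (mul_nonneg (abs_nonneg _) (n2_nonneg v))
    _ = (∑ i, ∑ j, |Q i j|) * n2 v ^ 2 := by
        rw [Finset.sum_mul]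
        exact Finset.sum_congr rfl (fun i _ => (Finset.sum_mul _ _ _).symm)

def PolyP (A : Matrix (Fin m) (Fin n) ℝ) (b : Fin m → ℝ) : Set (Fin n → ℝ) :=
  {x | ∀ i, b i ≤ ∑ j, A i j * x j}

lemma sum_A_add (A : Matrix (Fin m) (Fin n) ℝ) (i : Fin m) (x v : Fin n → ℝ) (t : ℝ) :
    ∑ j, A i j * (x + t • v) j = (∑ j, A i j * x j) + t * ∑ j, A i j * v j := by
  rw [Finset.mul_sum, ← Finset.sum_add_distrib]
  apply Finset.sum_congr rfl; intros
  simp only [Pi.add_apply, Pi.smul_apply, smul_eq_mul]; ring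

lemma ray_mem {A : Matrix (Fin m) (Fin n) ℝ} {b : Fin m → ℝ} {x : Fin n → ℝ}
    (hx : x ∈ PolyP A b) {v : Fin n → ℝ}
    (hv : ∀ i, (∑ j, A i j * x j) = b i → 0 ≤ ∑ j, A i j * v j) :
    ∃ δ > (0:ℝ), ∀ t : ℝ, 0 < t → t < δ → x + t • v ∈ PolyP A b := by
  have hev : ∀ i : Fin m, ∀ᶠ t in 𝓝[>] (0:ℝ), b i ≤ (∑ j, A i j * x j) + t * ∑ j, A i j * v j := by
    intro i
    rcases eq_or_lt_of_le (hx i) with heq | hlt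
    · filter_upwards [self_mem_nhdsWithin] with t ht
      have := hv i heq.symm
      nlinarith [mem_Ioi.mp ht]
    · have hcont : Tendsto (fun t : ℝ => (∑ j, A i j * x j) + t * ∑ j, A i j * v j)
          (𝓝[>] 0) (𝓝 ((∑ j, A i j * x j) + 0 * ∑ j, A i j * v j)) := by
        apply Tendsto.mono_left _ nhdsWithin_le_nhds
        exact (tendsto_const_nhds.add ((continuous_id.mul continuous_const).tendsto 0))
      have : ∀ᶠ t in 𝓝[>] (0:ℝ),
          b i < (∑ j, A i j * x j) + t * ∑ j, A i j * v j := by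
        apply hcont.eventually_const_lt
        simpa using hlt
      filter_upwards [this] with t ht using le_of_lt ht
  have hall : ∀ᶠ t in 𝓝[>] (0:ℝ), ∀ i,
      b i ≤ (∑ j, A i j * x j) + t * ∑ j, A i j * v j := eventually_all.mpr hev
  rw [eventually_nhdsWithin_iff] at hall
  rcases Metric.eventually_nhds_iff.mp hall with ⟨δ, hδ, hball⟩
  refine ⟨δ, hδ, fun t ht htδ => ?_⟩
  intro i
  rw [sum_A_add]
  have : |t - 0| < δ := by rw [sub_zero, abs_of_pos ht]; exact htδ
  exact hball (by simpa [Real.dist_eq] using this) (mem_Ioi.mpr ht) i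

lemma tangent_iff {A : Matrix (Fin m) (Fin n) ℝ} {b : Fin m → ℝ} {x : Fin n → ℝ}
    (hx : x ∈ PolyP A b) (v : Fin n → ℝ) :
    v ∈ TangentCone (PolyP A b) x ↔
      ∀ i, (∑ j, A i j * x j) = b i → 0 ≤ ∑ j, A i j * v j := by
  constructor
  · rintro ⟨xs, τ, hxs, _hlim, hτpos, _hτ0, hvlim⟩ i hact
    have key : ∀ k, 0 ≤ ∑ j, A i j * ((τ k)⁻¹ • (xs k - x)) j := by
      intro k
      have h1 : ∑ j, A i j * ((τ k)⁻¹ • (xs k - x)) j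
          = (τ k)⁻¹ * ((∑ j, A i j * xs k j) - ∑ j, A i j * x j) := by
        rw [mul_sub, Finset.mul_sum, Finset.mul_sum, ← Finset.sum_sub_distrib]
        apply Finset.sum_congr rfl; intros
        simp only [Pi.smul_apply, Pi.sub_apply, smul_eq_mul]; ring
      rw [h1]
      apply mul_nonneg (le_of_lt (inv_pos.mpr (hτpos k)))
      rw [hact, sub_nonneg]
      exact hxs k i
    exact ge_of_tendsto' (tendsto_dot (A i) hvlim) key |>.trans_eq rfl |> id
  · intro hv
    obtain ⟨δ, hδ, hray⟩ := ray_mem hx hv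
    refine ⟨fun k => x + (δ/(k+2)) • v, fun k => δ/(k+2), fun k => ?_, ?_, fun k => ?_, ?_, ?_⟩
    · apply hray
      · positivity
      · rw [div_lt_iff₀ (by positivity)]
        nlinarith [Nat.cast_nonneg (α := ℝ) k]
    · have hτ0 : Tendsto (fun k : ℕ => δ/((k:ℝ)+2)) atTop (𝓝 0) := by
        apply Tendsto.const_div_atTop
        exact tendsto_atTop_add_const_right _ 2 tendsto_natCast_atTop_atTop
      have := hτ0.smul_const v
      rw [zero_smul] at this
      have h2 := (tendsto_const_nhds : Tendsto (fun _ : ℕ => x) atTop (𝓝 x)).add this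
      simpa using h2
    · positivity
    · apply Tendsto.const_div_atTop
      exact tendsto_atTop_add_const_right _ 2 tendsto_natCast_atTop_atTop
    · have : ∀ k : ℕ, (δ/((k:ℝ)+2))⁻¹ • (x + (δ/(k+2)) • v - x) = v := by
        intro k
        rw [add_sub_cancel_left, smul_smul, inv_mul_cancel₀ (by positivity), one_smul]
      simp only [this]
      exact tendsto_const_nhds

lemma dot_ray (a v w : Fin n → ℝ) (t : ℝ) :
    ∑ j, a j * (v + t • w) j = (∑ j, a j * v j) + t * ∑ j, a j * w j := by
  rw [Finset.mul_sum, ← Finset.sum_add_distrib]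
  apply Finset.sum_congr rfl; intros
  simp only [Pi.add_apply, Pi.smul_apply, smul_eq_mul]; ring

lemma dot_sub (a u v : Fin n → ℝ) :
    ∑ j, a j * (u - v) j = (∑ j, a j * u j) - ∑ j, a j * v j := by
  rw [← Finset.sum_sub_distrib]
  apply Finset.sum_congr rfl; intros
  simp only [Pi.sub_apply]; ring

lemma nonneg_of_small {s M δ : ℝ} (hδ : 0 < δ)
    (h : ∀ t : ℝ, 0 < t → t < δ → 0 ≤ t * s + t^2/2 * M) : 0 ≤ s := by
  by_contra hs
  push_neg at hs
  set t := min (δ/2) ((-s)/(|M|+1)) with ht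
  have habs : 0 ≤ |M| := abs_nonneg M
  have hMle : M ≤ |M| := le_abs_self M
  have ht0 : 0 < t := lt_min (by linarith) (div_pos (by linarith) (by positivity))
  have htδ : t < δ := lt_of_le_of_lt (min_le_left _ _) (by linarith)
  have ht2 : t ≤ (-s)/(|M|+1) := min_le_right _ _
  have key := h t ht0 htδ
  have h2 : t * (|M|+1) ≤ -s := (le_div_iff₀ (by positivity)).mp ht2
  nlinarith [mul_pos ht0 ht0, mul_le_mul_of_nonneg_left h2 (le_of_lt ht0)]


/-- Local minimizer implies stationary. -/
lemma locmin_stat {Q : Matrix (Fin n) (Fin n) ℝ} (hQ : ∀ i j, Q i j = Q j i)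
    {c : Fin n → ℝ} {α : ℝ} {A : Matrix (Fin m) (Fin n) ℝ} {b : Fin m → ℝ}
    {y : Fin n → ℝ}
    (hmin : IsLocMin' (quadF Q c α) (PolyP A b) y) : IsStatQ Q c (PolyP A b) y := by
  obtain ⟨hy, ε, hε, hm⟩ := hmin
  refine ⟨hy, fun x hx => ?_⟩
  set d : Fin n → ℝ := x - y with hd
  have hsum : ∑ i, gradQ Q c y i * (x i - y i) = dotp (gradQ Q c y) d := by
    apply Finset.sum_congr rfl; intros; simp [hd, dotp]
  rw [hsum]
  set δ := min 1 (ε/(n2 d + 1)) with hδdef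
  have hn2 : 0 ≤ n2 d := n2_nonneg d
  have hδ : 0 < δ := lt_min one_pos (by positivity)
  apply nonneg_of_small (M := QF Q d) hδ
  intro t ht0 htδ
  have ht1 : t ≤ 1 := le_of_lt (lt_of_lt_of_le htδ (min_le_left _ _))
  have htε : t * n2 d < ε := by
    have h1 : t < ε/(n2 d + 1) := lt_of_lt_of_le htδ (min_le_right _ _)
    rw [lt_div_iff₀ (by positivity)] at h1
    nlinarith
  have hmem : y + t • d ∈ PolyP A b := by
    intro i
    rw [dot_ray, hd, dot_sub]
    have h1 := hy i
    have h2 := hx i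
    nlinarith
  have hle := hm (y + t • d) hmem (by rw [add_sub_cancel_left, n2_smul, abs_of_pos ht0]; exact htε)
  rw [quad_ray hQ] at hle
  nlinarith [hle]

/-- Strict local minimizer implies strict copositivity on the critical cone. -/
lemma strict_to_copos {Q : Matrix (Fin n) (Fin n) ℝ} (hQ : ∀ i j, Q i j = Q j i)
    {c : Fin n → ℝ} {α : ℝ} {A : Matrix (Fin m) (Fin n) ℝ} {b : Fin m → ℝ}
    {xbar : Fin n → ℝ}
    (hmin : IsStrictLocMin (quadF Q c α) (PolyP A b) xbar)
    {v : Fin n → ℝ} (hvT : v ∈ TangentCone (PolyP A b) xbar)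
    (hvg : dotp (gradQ Q c xbar) v = 0) (hv0 : v ≠ 0) : 0 < QF Q v := by
  obtain ⟨hy, ε, hε, hm⟩ := hmin
  obtain ⟨δ₀, hδ₀, hray⟩ := ray_mem hy ((tangent_iff hy v).mp hvT)
  have hn2 : 0 ≤ n2 v := n2_nonneg v
  set t := min (δ₀/2) (ε/(n2 v + 1)/2) with htdef
  have ht0 : 0 < t := lt_min (by linarith) (by positivity)
  have htδ : t < δ₀ := lt_of_le_of_lt (min_le_left _ _) (by linarith)
  have htε : t * n2 v < ε := by
    have h1 : t ≤ ε/(n2 v + 1)/2 := min_le_right _ _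
    have h2 : ε/(n2 v+1)/2 * (n2 v + 1) < ε := by
      have h3 : ε/(n2 v+1) * (n2 v+1) = ε := div_mul_cancel₀ ε (by positivity)
      nlinarith [h3, hε]
    nlinarith [mul_le_mul_of_nonneg_right h1 (le_of_lt (by positivity : (0:ℝ) < n2 v + 1))]
  have hmem := hray t ht0 htδ
  have hne : xbar + t • v ≠ xbar := by
    intro hcontra
    apply hv0
    have : t • v = 0 := by
      have := congrArg (fun z => z - xbar) hcontra
      simpa using this
    rcases smul_eq_zero.mp this with h | h
    · exact absurd h (ne_of_gt ht0)
    · exact h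
  have hlt := hm (xbar + t • v) hmem
    (by rw [add_sub_cancel_left, n2_smul, abs_of_pos ht0]; exact htε) hne
  rw [quad_ray hQ, hvg] at hlt
  nlinarith [hlt]

lemma QF_smul (Q : Matrix (Fin n) (Fin n) ℝ) (t : ℝ) (v : Fin n → ℝ) :
    QF Q (t • v) = t^2 * QF Q v := by
  rw [QF, QF, Finset.mul_sum]
  apply Finset.sum_congr rfl; intro i _
  rw [Finset.mul_sum]
  apply Finset.sum_congr rfl; intros
  simp only [Pi.smul_apply, smul_eq_mul]; ring

lemma dotp_smul (a : Fin n → ℝ) (t : ℝ) (v : Fin n → ℝ) :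
    dotp a (t • v) = t * dotp a v := by
  rw [dotp, dotp, Finset.mul_sum]
  apply Finset.sum_congr rfl; intros
  simp only [Pi.smul_apply, smul_eq_mul]; ring

lemma grad_add (Q : Matrix (Fin n) (Fin n) ℝ) (c : Fin n → ℝ) (x d : Fin n → ℝ) (i : Fin n) :
    gradQ Q c (x + d) i = gradQ Q c x i + ∑ j, Q i j * d j := by
  rw [gradQ, gradQ]
  have : ∑ j, Q i j * (x + d) j = ∑ j, (Q i j * x j + Q i j * d j) := by
    apply Finset.sum_congr rfl; intros
    simp only [Pi.add_apply]; ring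
  rw [this, Finset.sum_add_distrib]; ring

lemma dotp_grad_add (Q : Matrix (Fin n) (Fin n) ℝ) (c : Fin n → ℝ) (x d w : Fin n → ℝ) :
    dotp (gradQ Q c (x + d)) w = dotp (gradQ Q c x) w + ∑ i, (∑ j, Q i j * d j) * w i := by
  rw [dotp, dotp, ← Finset.sum_add_distrib]
  apply Finset.sum_congr rfl; intro i _
  rw [grad_add]; ring

lemma tendsto_dotQ (Q : Matrix (Fin n) (Fin n) ℝ) (u : Fin n → ℝ)
    {f : ℕ → Fin n → ℝ} {x : Fin n → ℝ} (h : Tendsto f atTop (𝓝 x)) :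
    Tendsto (fun k => ∑ i, (∑ j, Q i j * f k j) * u i) atTop
      (𝓝 (∑ i, (∑ j, Q i j * x j) * u i)) := by
  rw [tendsto_pi_nhds] at h
  exact tendsto_finset_sum _ (fun i _ =>
    (tendsto_finset_sum _ (fun j _ => tendsto_const_nhds.mul (h j))).mul tendsto_const_nhds)

lemma QF_cross_smul (Q : Matrix (Fin n) (Fin n) ℝ) (a w : Fin n → ℝ) (t : ℝ) :
    ∑ i, ∑ j, Q i j * a i * (t • w) j = t * ∑ i, ∑ j, Q i j * a i * w j := by
  rw [Finset.mul_sum]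
  apply Finset.sum_congr rfl; intro i _
  rw [Finset.mul_sum]
  apply Finset.sum_congr rfl; intros
  simp only [Pi.smul_apply, smul_eq_mul]; ring

lemma n2_zero : n2 (0 : Fin n → ℝ) = 0 := by simp [n2]

lemma tendsto_one_div_k : Tendsto (fun k : ℕ => 1/((k:ℝ)+1)) atTop (𝓝 0) :=
  tendsto_one_div_add_atTop_nhds_zero_nat

def Cset (Q : Matrix (Fin n) (Fin n) ℝ) (c : Fin n → ℝ) (A : Matrix (Fin m) (Fin n) ℝ)
    (b : Fin m → ℝ) (xbar : Fin n → ℝ) : Set (Fin n → ℝ) :=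
  {v | v ∈ TangentCone (PolyP A b) xbar ∧ dotp (gradQ Q c xbar) v = 0}

lemma Cset_comb {Q : Matrix (Fin n) (Fin n) ℝ} {c : Fin n → ℝ} {A : Matrix (Fin m) (Fin n) ℝ}
    {b : Fin m → ℝ} {xbar : Fin n → ℝ} (hxbar : xbar ∈ PolyP A b)
    {v u : Fin n → ℝ} (hv : v ∈ Cset Q c A b xbar) (hu : u ∈ Cset Q c A b xbar)
    {t : ℝ} (ht0 : 0 ≤ t) (ht1 : t ≤ 1) : v + t • (u - v) ∈ Cset Q c A b xbar := by
  obtain ⟨hvT, hvg⟩ := hv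
  obtain ⟨huT, hug⟩ := hu
  rw [tangent_iff hxbar] at hvT huT
  refine ⟨(tangent_iff hxbar _).mpr ?_, ?_⟩
  · intro i hact
    have h1 := hvT i hact
    have h2 := huT i hact
    rw [dot_ray, dot_sub]
    nlinarith
  · rw [dotp] at hvg hug ⊢
    rw [dot_ray, dot_sub]
    rw [hvg, hug]; ring

lemma copos_R0_to_strict {Q : Matrix (Fin n) (Fin n) ℝ} (hQ : ∀ i j, Q i j = Q j i)
    {c : Fin n → ℝ} {A : Matrix (Fin m) (Fin n) ℝ} {b : Fin m → ℝ}
    {xbar : Fin n → ℝ} (hxbar : xbar ∈ PolyP A b)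
    (hcop : ∀ v ∈ Cset Q c A b xbar, 0 ≤ QF Q v)
    (hR0 : ∀ v ∈ Cset Q c A b xbar, QF Q v = 0 →
      (∀ u ∈ Cset Q c A b xbar, 0 ≤ ∑ i, (∑ j, Q i j * v j) * u i) → v = 0) :
    ∀ v ∈ Cset Q c A b xbar, v ≠ 0 → 0 < QF Q v := by
  intro v hv hv0
  rcases lt_or_ge 0 (QF Q v) with h | h
  · exact h
  exfalso
  have hQFv : QF Q v = 0 := le_antisymm h (hcop v hv)
  apply hv0
  apply hR0 v hv hQFv
  intro u hu
  set Z := ∑ i, ∑ j, Q i j * v i * (u - v) j with hZ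
  have hZnn2 : 0 ≤ 2 * Z := by
    apply nonneg_of_small (M := 2 * QF Q (u - v)) (δ := 1) one_pos
    intro t ht0 ht1
    have hmem := Cset_comb hxbar hv hu (le_of_lt ht0) (le_of_lt ht1)
    have hQF := hcop _ hmem
    rw [QF_add hQ, hQFv, QF_cross_smul, QF_smul] at hQF
    nlinarith [hQF]
  have hZnn : 0 ≤ Z := by linarith
  -- now 0 ≤ Z = ∑∑ Q i j v i (u - v) j = ∑∑ Q i j v i u j - QF v = ∑ i (Qv) i u i
  have e1 : Z = (∑ i, ∑ j, Q i j * v i * u j) - QF Q v := by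
    rw [hZ, QF]
    rw [← Finset.sum_sub_distrib]
    apply Finset.sum_congr rfl; intro i _
    rw [← Finset.sum_sub_distrib]
    apply Finset.sum_congr rfl; intro j _
    simp only [Pi.sub_apply]; ring
  have e2 : ∑ i, (∑ j, Q i j * v j) * u i = ∑ i, ∑ j, Q i j * v i * u j := by
    rw [← sum_swap_sym hQ u v]
    apply Finset.sum_congr rfl; intro i _
    rw [Finset.sum_mul]
    apply Finset.sum_congr rfl; intro j _; ring
  rw [e2, ← hQFv]
  rw [e1, hQFv] at hZnn
  linarith [hZnn]

lemma strict_to_strong {Q : Matrix (Fin n) (Fin n) ℝ} (hQ : ∀ i j, Q i j = Q j i)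
    {c : Fin n → ℝ} {α : ℝ} {A : Matrix (Fin m) (Fin n) ℝ} {b : Fin m → ℝ}
    {xbar : Fin n → ℝ}
    (hstat : IsStatQ Q c (PolyP A b) xbar)
    (hcop : ∀ v ∈ Cset Q c A b xbar, v ≠ 0 → 0 < QF Q v) :
    IsStrongLocMin (quadF Q c α) (PolyP A b) xbar := by
  obtain ⟨hxbar, hst⟩ := hstat
  refine ⟨hxbar, ?_⟩
  by_contra hcon
  push_neg at hcon
  have H : ∀ k : ℕ, ∃ y ∈ PolyP A b, n2 (y - xbar) < 1/((k:ℝ)+1) ∧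
      quadF Q c α y < quadF Q c α xbar + (1/((k:ℝ)+1)) * n2 (y - xbar) ^ 2 := by
    intro k
    obtain ⟨y, hy1, hy2, hy3⟩ := hcon (1/((k:ℝ)+1)) (by positivity) (1/((k:ℝ)+1)) (by positivity)
    exact ⟨y, hy1, hy2, hy3⟩
  choose y hyP hyε hylt using H
  set d : ℕ → Fin n → ℝ := fun k => y k - xbar with hd
  set r : ℕ → ℝ := fun k => n2 (d k) with hr
  have hrpos : ∀ k, 0 < r k := by
    intro k
    rcases lt_or_ge 0 (r k) with h | h
    · exact h
    have hr0 : r k = 0 := le_antisymm h (n2_nonneg _)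
    have : y k = xbar := by
      have := n2_eq_zero (v := d k) hr0
      rw [hd] at this
      simpa [sub_eq_zero] using this
    have h2 := hylt k
    rw [this] at h2
    simp only [sub_self, n2_zero] at h2
    nlinarith [h2]
  set v : ℕ → Fin n → ℝ := fun k => (r k)⁻¹ • d k with hv
  have hn2v : ∀ k, n2 (v k) = 1 := by
    intro k
    rw [hv]
    simp only
    rw [n2_smul, abs_of_pos (inv_pos.mpr (hrpos k))]
    exact inv_mul_cancel₀ (ne_of_gt (hrpos k))
  obtain ⟨w, φ, hφ, hw1, hwlim⟩ := exists_subseq hn2v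
  -- basic per-index facts
  set g := gradQ Q c xbar with hg
  have hgd : ∀ k, 0 ≤ dotp g (d k) := by
    intro k
    have := hst (y k) (hyP k)
    calc (0:ℝ) ≤ ∑ i, gradQ Q c xbar i * (y k i - xbar i) := this
      _ = dotp g (d k) := by
          apply Finset.sum_congr rfl; intros; simp [hd, dotp, hg]
  have htaylor : ∀ k, dotp g (d k) + (1/2) * QF Q (d k) < (1/((k:ℝ)+1)) * r k ^ 2 := by
    intro k
    have h1 := hylt k
    have h2 : quadF Q c α (y k) = quadF Q c α xbar + dotp g (d k) + (1/2) * QF Q (d k) := by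
      rw [← quad_taylor hQ c α xbar (d k)]
      congr 1
      rw [hd]; abel_nf; simp
    rw [h2] at h1
    have e : n2 (y k - xbar) = r k := rfl
    rw [e] at h1
    linarith [h1]
  set Ms := ∑ i, ∑ j, |Q i j| with hMs
  have hMs0 : 0 ≤ Ms := Finset.sum_nonneg (fun i _ => Finset.sum_nonneg (fun j _ => abs_nonneg _))
  have hQFv_bound : ∀ k, |QF Q (v k)| ≤ Ms := by
    intro k
    have := abs_QF_le Q (v k)
    rw [hn2v k] at this
    simpa using this
  -- QF Q (v k) < 2/(k+1)
  have hQFv : ∀ k, QF Q (v k) < 2/((k:ℝ)+1) := by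
    intro k
    have h1 := htaylor k
    have h2 : QF Q (v k) = (r k)⁻¹^2 * QF Q (d k) := by rw [hv]; exact QF_smul Q _ _
    have hrk := hrpos k
    have h3 : dotp g (d k) ≥ 0 := hgd k
    have h4 : (1/2) * QF Q (d k) < (1/((k:ℝ)+1)) * r k ^ 2 := by linarith
    rw [h2]
    have h5 : (r k)⁻¹^2 * ((1/2) * QF Q (d k)) < (r k)⁻¹^2 * ((1/((k:ℝ)+1)) * r k ^ 2) :=
      mul_lt_mul_of_pos_left h4 (by positivity)
    have h6 : (r k)⁻¹^2 * r k ^2 = 1 := by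
      rw [← mul_pow, inv_mul_cancel₀ (ne_of_gt hrk), one_pow]
    have h7 : (r k)⁻¹^2 * ((1/((k:ℝ)+1)) * r k ^ 2) = 1/((k:ℝ)+1) := by
      field_simp
    have h8 : (r k)⁻¹^2 * QF Q (d k) = 2*((r k)⁻¹ ^2 * ((1/2) * QF Q (d k))) := by ring
    rw [h8]
    have h9 : 2/((k:ℝ)+1) = 2*(1/((k:ℝ)+1)) := by ring
    linarith [h5, h7, h9]
  -- dotp g (v k) ∈ [0, (1/(k+1)) * (1 + Ms/2)]
  have hgv0 : ∀ k, 0 ≤ dotp g (v k) := by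
    intro k
    rw [hv]
    simp only
    rw [dotp_smul]
    exact mul_nonneg (le_of_lt (inv_pos.mpr (hrpos k))) (hgd k)
  have hgvU : ∀ k, dotp g (v k) ≤ (1/((k:ℝ)+1)) * (1 + Ms/2) := by
    intro k
    have h1 := htaylor k
    have hrk := hrpos k
    have hrsmall : r k < 1/((k:ℝ)+1) := hyε k
    have h2 : dotp g (v k) = (r k)⁻¹ * dotp g (d k) := by rw [hv]; exact dotp_smul _ _ _
    have h3 : QF Q (d k) = r k ^2 * QF Q (v k) := by
      have := QF_smul Q (r k) (v k)
      rw [hv] at this ⊢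
      rw [smul_smul, mul_inv_cancel₀ (ne_of_gt hrk), one_smul] at this
      exact this
    have h4 : dotp g (d k) < (1/((k:ℝ)+1)) * r k ^2 + r k^2 * (Ms/2) := by
      have hb := hQFv_bound k
      have : -Ms ≤ QF Q (v k) := by
        rcases abs_le.mp hb with ⟨h, _⟩; linarith
      rw [h3] at h1
      nlinarith [sq_nonneg (r k), this, h1]
    have h5 : (r k)⁻¹ * dotp g (d k) ≤ (r k)⁻¹ * ((1/((k:ℝ)+1)) * r k ^2 + r k^2 * (Ms/2)) :=
      mul_le_mul_of_nonneg_left (le_of_lt h4) (by positivity)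
    have h6 : (r k)⁻¹ * ((1/((k:ℝ)+1)) * r k ^2 + r k^2 * (Ms/2)) = r k * (1/((k:ℝ)+1)) + r k * (Ms/2) := by
      field_simp
    rw [h6] at h5
    have h7 : r k * (1/((k:ℝ)+1)) ≤ 1 * (1/((k:ℝ)+1)) := by
      apply mul_le_mul_of_nonneg_right _ (by positivity)
      have : (1:ℝ)/((k:ℝ)+1) ≤ 1 := by
        rw [div_le_one (by positivity)]; linarith [Nat.cast_nonneg (α := ℝ) k]
      linarith [hrsmall]
    have h8 : r k * (Ms/2) ≤ (1/((k:ℝ)+1)) * (Ms/2) :=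
      mul_le_mul_of_nonneg_right (le_of_lt hrsmall) (by positivity)
    calc dotp g (v k) ≤ r k * (1/((k:ℝ)+1)) + r k * (Ms/2) := by rw [h2]; exact h5
      _ ≤ 1 * (1/((k:ℝ)+1)) + (1/((k:ℝ)+1)) * (Ms/2) := by linarith
      _ = (1/((k:ℝ)+1)) * (1 + Ms/2) := by ring
  -- limits along the subsequence
  have hsub0 : Tendsto (fun k : ℕ => 1/((φ k:ℝ)+1)) atTop (𝓝 0) := by
    apply squeeze_zero (fun k => by positivity) (fun k => ?_) tendsto_one_div_k
    have : (k:ℝ) + 1 ≤ (φ k : ℝ) + 1 := by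
      have hc : (k:ℝ) ≤ (φ k : ℝ) := by exact_mod_cast hφ.le_apply
      linarith
    apply div_le_div_of_nonneg_left (by norm_num) (by positivity) this
  have hgw : dotp g w = 0 := by
    have hlim : Tendsto (fun k => dotp g (v (φ k))) atTop (𝓝 (dotp g w)) := by
      have := tendsto_dot g hwlim
      exact this
    have hB : Tendsto (fun k => 1/((φ k:ℝ)+1) * (1+Ms/2)) atTop (𝓝 0) := by
      simpa using hsub0.mul_const (1+Ms/2)
    apply le_antisymm
    · apply le_of_tendsto_of_tendsto hlim hB
      filter_upwards with k
      exact hgvU (φ k)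
    · exact ge_of_tendsto' hlim (fun k => hgv0 (φ k))
  have hQFw : QF Q w ≤ 0 := by
    have hlim : Tendsto (fun k => QF Q (v (φ k))) atTop (𝓝 (QF Q w)) := tendsto_qf Q hwlim
    have h2 : Tendsto (fun k : ℕ => 2/((φ k:ℝ)+1)) atTop (𝓝 0) := by
      have := hsub0.const_mul 2
      rw [mul_zero] at this
      convert this using 2 with k
      ring
    have := le_of_tendsto_of_tendsto hlim h2 (by filter_upwards with k; exact le_of_lt (hQFv (φ k)))
    linarith [this]
  have hr0 : Tendsto (fun k => r (φ k)) atTop (𝓝 0) :=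
    squeeze_zero (fun k => le_of_lt (hrpos _)) (fun k => le_of_lt (hyε (φ k))) hsub0
  have hwT : w ∈ TangentCone (PolyP A b) xbar := by
    refine ⟨fun k => y (φ k), fun k => r (φ k), fun k => hyP (φ k), ?_, fun k => hrpos (φ k), hr0, ?_⟩
    · exact tendsto_of_n2 hr0
    · exact hwlim
  have hw0 : w ≠ 0 := by
    intro h
    rw [h, n2_zero] at hw1
    norm_num at hw1
  exact absurd (hcop w ⟨hwT, hgw⟩ hw0) (not_lt.mpr hQFw)

lemma stat_at_dir {Q : Matrix (Fin n) (Fin n) ℝ} {c : Fin n → ℝ}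
    {A : Matrix (Fin m) (Fin n) ℝ} {b : Fin m → ℝ} {z : Fin n → ℝ}
    (hz : IsStatQ Q c (PolyP A b) z) {u : Fin n → ℝ}
    (hu : ∀ i, (∑ j, A i j * z j) = b i → 0 ≤ ∑ j, A i j * u j) :
    0 ≤ dotp (gradQ Q c z) u := by
  obtain ⟨hzP, hst⟩ := hz
  obtain ⟨δ, hδ, hray⟩ := ray_mem hzP hu
  have hmem := hray (δ/2) (by linarith) (by linarith)
  have h1 := hst _ hmem
  have h2 : ∑ i, gradQ Q c z i * ((z + (δ/2) • u) i - z i) = (δ/2) * dotp (gradQ Q c z) u := by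
    rw [dotp, Finset.mul_sum]
    apply Finset.sum_congr rfl; intros
    simp only [Pi.add_apply, Pi.smul_apply, smul_eq_mul]; ring
  rw [h2] at h1
  nlinarith [h1]

lemma isolated_stat {Q : Matrix (Fin n) (Fin n) ℝ} (hQ : ∀ i j, Q i j = Q j i)
    {c : Fin n → ℝ} {A : Matrix (Fin m) (Fin n) ℝ} {b : Fin m → ℝ}
    {xbar : Fin n → ℝ}
    (hstat : IsStatQ Q c (PolyP A b) xbar)
    (hcop : ∀ v ∈ Cset Q c A b xbar, 0 ≤ QF Q v)
    (hR0 : ∀ v ∈ Cset Q c A b xbar, QF Q v = 0 →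
      (∀ u ∈ Cset Q c A b xbar, 0 ≤ ∑ i, (∑ j, Q i j * v j) * u i) → v = 0) :
    ∃ ε > (0:ℝ), ∀ y, IsStatQ Q c (PolyP A b) y → n2 (y - xbar) < ε → y = xbar := by
  obtain ⟨hxbar, hst⟩ := hstat
  by_contra hcon
  push_neg at hcon
  have H : ∀ k : ℕ, ∃ y, IsStatQ Q c (PolyP A b) y ∧ n2 (y - xbar) < 1/((k:ℝ)+1) ∧ y ≠ xbar := by
    intro k
    obtain ⟨y, h1, h2, h3⟩ := hcon (1/((k:ℝ)+1)) (by positivity)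
    exact ⟨y, h1, h2, h3⟩
  choose y hyS hyε hyne using H
  have hyP : ∀ k, y k ∈ PolyP A b := fun k => (hyS k).1
  set d : ℕ → Fin n → ℝ := fun k => y k - xbar with hd
  set r : ℕ → ℝ := fun k => n2 (d k) with hr
  have hrpos : ∀ k, 0 < r k := by
    intro k
    apply n2_pos
    rw [hd]
    simp only [ne_eq, sub_eq_zero]
    exact hyne k
  set v : ℕ → Fin n → ℝ := fun k => (r k)⁻¹ • d k with hv
  have hn2v : ∀ k, n2 (v k) = 1 := by
    intro k
    rw [hv]
    simp only
    rw [n2_smul, abs_of_pos (inv_pos.mpr (hrpos k))]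
    exact inv_mul_cancel₀ (ne_of_gt (hrpos k))
  obtain ⟨w, φ, hφ, hw1, hwlim⟩ := exists_subseq hn2v
  set g := gradQ Q c xbar with hg
  -- facts
  have hgd : ∀ k, 0 ≤ dotp g (d k) := by
    intro k
    have := hst (y k) (hyP k)
    calc (0:ℝ) ≤ ∑ i, gradQ Q c xbar i * (y k i - xbar i) := this
      _ = dotp g (d k) := by
          apply Finset.sum_congr rfl; intros; simp [hd, dotp, hg]
  have hkey : ∀ k, dotp g (d k) + QF Q (d k) ≤ 0 := by
    intro k
    have h1 := (hyS k).2 xbar hxbar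
    have h2 : ∑ i, gradQ Q c (y k) i * (xbar i - y k i)
        = -(dotp g (d k) + QF Q (d k)) := by
      have hyk : y k = xbar + d k := by rw [hd]; abel_nf; simp
      calc ∑ i, gradQ Q c (y k) i * (xbar i - y k i)
          = ∑ i, (g i + ∑ j, Q i j * d k j) * (-(d k i)) := by
            apply Finset.sum_congr rfl; intro i _
            rw [hyk, grad_add]
            simp only [Pi.add_apply, Pi.sub_apply]
            rw [hg]
            ring_nf
        _ = -(dotp g (d k) + ∑ i, d k i * (∑ j, Q i j * d k j)) := by
            rw [dotp, ← Finset.sum_add_distrib, ← Finset.sum_neg_distrib]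
            apply Finset.sum_congr rfl; intros; ring
        _ = -(dotp g (d k) + QF Q (d k)) := by rw [QF_eq_dot]
    rw [h2] at h1
    linarith [h1]
  set Ms := ∑ i, ∑ j, |Q i j| with hMs
  have hMs0 : 0 ≤ Ms := Finset.sum_nonneg (fun i _ => Finset.sum_nonneg (fun j _ => abs_nonneg _))
  -- QF Q (v k) ≤ 0 and dotp g (v k) ∈ [0, Ms * r k]
  have hQFv : ∀ k, QF Q (v k) ≤ 0 := by
    intro k
    have h2 : QF Q (v k) = (r k)⁻¹^2 * QF Q (d k) := by rw [hv]; exact QF_smul Q _ _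
    have h3 : QF Q (d k) ≤ 0 := by linarith [hkey k, hgd k]
    rw [h2]
    apply mul_nonpos_of_nonneg_of_nonpos (by positivity) h3
  have hgv0 : ∀ k, 0 ≤ dotp g (v k) := by
    intro k
    rw [hv]
    simp only
    rw [dotp_smul]
    exact mul_nonneg (le_of_lt (inv_pos.mpr (hrpos k))) (hgd k)
  have hgvU : ∀ k, dotp g (v k) ≤ Ms * r k := by
    intro k
    have h1 := hkey k
    have hrk := hrpos k
    have h2 : dotp g (v k) = (r k)⁻¹ * dotp g (d k) := by rw [hv]; exact dotp_smul _ _ _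
    have h3 : QF Q (d k) = r k ^2 * QF Q (v k) := by
      have := QF_smul Q (r k) (v k)
      rw [hv] at this ⊢
      rw [smul_smul, mul_inv_cancel₀ (ne_of_gt hrk), one_smul] at this
      exact this
    have hb : |QF Q (v k)| ≤ Ms := by
      have := abs_QF_le Q (v k)
      rw [hn2v k] at this
      simpa using this
    have h4 : dotp g (d k) ≤ r k^2 * Ms := by
      have h5 : -QF Q (v k) ≤ Ms := by
        rcases abs_le.mp hb with ⟨h, _⟩; linarith
      rw [h3] at h1
      nlinarith [sq_nonneg (r k), h1, h5]
    rw [h2]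
    calc (r k)⁻¹ * dotp g (d k) ≤ (r k)⁻¹ * (r k^2 * Ms) :=
          mul_le_mul_of_nonneg_left h4 (by positivity)
      _ = Ms * r k := by field_simp
  -- limits
  have hsub0 : Tendsto (fun k : ℕ => 1/((φ k:ℝ)+1)) atTop (𝓝 0) := by
    apply squeeze_zero (fun k => by positivity) (fun k => ?_) tendsto_one_div_k
    have : (k:ℝ) + 1 ≤ (φ k : ℝ) + 1 := by
      have hc : (k:ℝ) ≤ (φ k : ℝ) := by exact_mod_cast hφ.le_apply
      linarith
    apply div_le_div_of_nonneg_left (by norm_num) (by positivity) this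
  have hr0 : Tendsto (fun k => r (φ k)) atTop (𝓝 0) :=
    squeeze_zero (fun k => le_of_lt (hrpos _)) (fun k => le_of_lt (hyε (φ k))) hsub0
  have hylim : Tendsto (fun k => y (φ k)) atTop (𝓝 xbar) := tendsto_of_n2 hr0
  have hgw : dotp g w = 0 := by
    have hlim : Tendsto (fun k => dotp g (v (φ k))) atTop (𝓝 (dotp g w)) := tendsto_dot g hwlim
    have hB : Tendsto (fun k => Ms * r (φ k)) atTop (𝓝 0) := by
      simpa using hr0.const_mul Ms
    apply le_antisymm
    · apply le_of_tendsto_of_tendsto hlim hB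
      filter_upwards with k
      exact hgvU (φ k)
    · exact ge_of_tendsto' hlim (fun k => hgv0 (φ k))
  have hQFw : QF Q w ≤ 0 := by
    have hlim : Tendsto (fun k => QF Q (v (φ k))) atTop (𝓝 (QF Q w)) := tendsto_qf Q hwlim
    exact le_of_tendsto' hlim (fun k => hQFv (φ k))
  have hwT : w ∈ TangentCone (PolyP A b) xbar :=
    ⟨fun k => y (φ k), fun k => r (φ k), fun k => hyP (φ k), hylim,
      fun k => hrpos (φ k), hr0, hwlim⟩
  have hwC : w ∈ Cset Q c A b xbar := ⟨hwT, hgw⟩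
  have hQFw0 : QF Q w = 0 := le_antisymm hQFw (hcop w hwC)
  -- the dual-cone condition
  have hdual : ∀ u ∈ Cset Q c A b xbar, 0 ≤ ∑ i, (∑ j, Q i j * w j) * u i := by
    intro u hu
    obtain ⟨huT, hug⟩ := hu
    have huT' := (tangent_iff hxbar u).mp huT
    -- eventually, active constraints at y (φ k) are active at xbar
    have hev : ∀ᶠ k in atTop, ∀ i, (∑ j, A i j * y (φ k) j) = b i →
        (∑ j, A i j * xbar j) = b i := by
      rw [eventually_all]
      intro i
      rcases eq_or_lt_of_le (hxbar i) with heq | hlt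
      · filter_upwards with k _
        exact heq.symm
      · have hAy : Tendsto (fun k => ∑ j, A i j * y (φ k) j) atTop
            (𝓝 (∑ j, A i j * xbar j)) := tendsto_dot (A i) hylim
        have := hAy.eventually_const_lt hlt
        filter_upwards [this] with k hk habs
        exfalso
        rw [habs] at hk
        exact lt_irrefl _ hk
    have hev2 : ∀ᶠ k in atTop, 0 ≤ ∑ i, (∑ j, Q i j * v (φ k) j) * u i := by
      filter_upwards [hev] with k hk
      have hstep : 0 ≤ dotp (gradQ Q c (y (φ k))) u := by
        apply stat_at_dir (hyS (φ k))
        intro i hact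
        exact huT' i (hk i hact)
      have hyk : y (φ k) = xbar + d (φ k) := by rw [hd]; abel_nf; simp
      rw [hyk, dotp_grad_add] at hstep
      rw [← hg] at hstep
      rw [hug] at hstep
      -- 0 ≤ ∑ i (Q d) i u i ⇒ scale by (r (φ k))⁻¹
      have hscale : ∑ i, (∑ j, Q i j * v (φ k) j) * u i
          = (r (φ k))⁻¹ * ∑ i, (∑ j, Q i j * d (φ k) j) * u i := by
        rw [Finset.mul_sum]
        apply Finset.sum_congr rfl; intro i _
        rw [hv]
        simp only [Pi.smul_apply, smul_eq_mul]
        have e : ∑ x, Q i x * ((r (φ k))⁻¹ * d (φ k) x)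
            = (r (φ k))⁻¹ * ∑ j, Q i j * d (φ k) j := by
          rw [Finset.mul_sum]; apply Finset.sum_congr rfl; intros; ring
        rw [e]; ring
      rw [hscale]
      apply mul_nonneg (le_of_lt (inv_pos.mpr (hrpos (φ k))))
      linarith [hstep]
    have hlim : Tendsto (fun k => ∑ i, (∑ j, Q i j * v (φ k) j) * u i) atTop
        (𝓝 (∑ i, (∑ j, Q i j * w j) * u i)) := tendsto_dotQ Q u hwlim
    exact ge_of_tendsto hlim hev2
  have := hR0 w hwC hQFw0 hdual
  rw [this, n2_zero] at hw1
  norm_num at hw1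

lemma strong_to_loc {f : (Fin n → ℝ) → ℝ} {X : Set (Fin n → ℝ)} {xbar : Fin n → ℝ}
    (h : IsStrongLocMin f X xbar) : IsLocMin' f X xbar := by
  obtain ⟨hx, cc, hcc, ε, hε, hm⟩ := h
  refine ⟨hx, ε, hε, fun y hy hn => ?_⟩
  have := hm y hy hn
  nlinarith [sq_nonneg (n2 (y - xbar)), this]

lemma strong_to_strict {f : (Fin n → ℝ) → ℝ} {X : Set (Fin n → ℝ)} {xbar : Fin n → ℝ}
    (h : IsStrongLocMin f X xbar) : IsStrictLocMin f X xbar := by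
  obtain ⟨hx, cc, hcc, ε, hε, hm⟩ := h
  refine ⟨hx, ε, hε, fun y hy hn hne => ?_⟩
  have h1 := hm y hy hn
  have h2 : 0 < n2 (y - xbar) := n2_pos (fun hc => hne (by
    have := sub_eq_zero.mp hc; exact this))
  nlinarith [h1, h2, mul_pos hcc (pow_pos h2 2)]

lemma strict_to_loc {f : (Fin n → ℝ) → ℝ} {X : Set (Fin n → ℝ)} {xbar : Fin n → ℝ}
    (h : IsStrictLocMin f X xbar) : IsLocMin' f X xbar := by
  obtain ⟨hx, ε, hε, hm⟩ := h
  refine ⟨hx, ε, hε, fun y hy hn => ?_⟩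
  by_cases hc : y = xbar
  · rw [hc]
  · exact le_of_lt (hm y hy hn hc)

lemma iso_to_strict {f : (Fin n → ℝ) → ℝ} {X : Set (Fin n → ℝ)} {xbar : Fin n → ℝ}
    (h : IsIsolatedLocMin f X xbar) : IsStrictLocMin f X xbar := by
  obtain ⟨⟨hx, ε₀, hε₀, hm⟩, ε₁, hε₁, hiso⟩ := h
  set ε := min ε₀ ε₁ / 2 with hεdef
  have hεpos : 0 < ε := by
    have := lt_min hε₀ hε₁
    positivity
  have hεe0 : ε ≤ ε₀ := by
    have := min_le_left ε₀ ε₁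
    rw [hεdef]; linarith
  have hεe1 : ε ≤ ε₁ := by
    have := min_le_right ε₀ ε₁
    rw [hεdef]; linarith
  refine ⟨hx, ε, hεpos, fun y hy hyn hne => ?_⟩
  by_contra hnot
  push_neg at hnot
  have heq : f y = f xbar :=
    le_antisymm hnot (hm y hy (lt_of_lt_of_le hyn hεe0))
  have hylm : IsLocMin' f X y := by
    refine ⟨hy, ε, hεpos, fun z hz hzn => ?_⟩
    have hz0 : n2 (z - xbar) < ε₀ := by
      have ht := n2_sub_le z y xbar
      have : n2 (z - xbar) < 2 * ε := by linarith
      have h2 : 2 * ε ≤ min ε₀ ε₁ := by rw [hεdef]; linarith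
      have h3 := min_le_left ε₀ ε₁
      linarith
    rw [heq]
    exact hm z hz hz0
  exact hne (hiso y hylm (lt_of_lt_of_le hyn hεe1))

/-- Equivalent characterizations of strong/strict/isolated local minimizers
of a quadratic program over a polyhedron `P = {x : Ax ≥ b}`. -/
theorem stmt3 {n m : ℕ} (Q : Matrix (Fin n) (Fin n) ℝ) (hQ : ∀ i j, Q i j = Q j i)
    (c : Fin n → ℝ) (α : ℝ) (A : Matrix (Fin m) (Fin n) ℝ) (b : Fin m → ℝ)
    (P : Set (Fin n → ℝ)) (hP : P = {x | ∀ i, b i ≤ ∑ j, A i j * x j})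
    (xbar : Fin n → ℝ) (hxbar : xbar ∈ P)
    -- the critical cone C(x̄;q;P) = T(x̄;P) ∩ ∇q(x̄)^⊥
    (C : Set (Fin n → ℝ))
    (hC : C = {v | v ∈ TangentCone P xbar ∧ (∑ i, gradQ Q c xbar i * v i) = 0}) :
    -- (a1): stationary and Q strictly copositive on C
    ((IsStatQ Q c P xbar ∧ ∀ v ∈ C, v ≠ 0 → 0 < ∑ i, ∑ j, Q i j * v i * v j)
      ↔
    -- (a2): stationary, Q copositive on C, and the R₀-type implication holds
     (IsStatQ Q c P xbar ∧ (∀ v ∈ C, 0 ≤ ∑ i, ∑ j, Q i j * v i * v j) ∧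
       (∀ v ∈ C, (∑ i, v i * (∑ j, Q i j * v j)) = 0 →
         (∀ u ∈ C, 0 ≤ ∑ i, (∑ j, Q i j * v j) * u i) → v = 0))) ∧
    -- (a2) ↔ (a3): local minimizer and isolated stationary point
    ((IsStatQ Q c P xbar ∧ (∀ v ∈ C, 0 ≤ ∑ i, ∑ j, Q i j * v i * v j) ∧
       (∀ v ∈ C, (∑ i, v i * (∑ j, Q i j * v j)) = 0 →
         (∀ u ∈ C, 0 ≤ ∑ i, (∑ j, Q i j * v j) * u i) → v = 0))
      ↔
     (IsLocMin' (quadF Q c α) P xbar ∧ IsStatQ Q c P xbar ∧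
       ∃ ε > (0:ℝ), ∀ y, IsStatQ Q c P y → n2 (y - xbar) < ε → y = xbar)) ∧
    -- (a3) ↔ (a4): isolated local minimizer
    ((IsLocMin' (quadF Q c α) P xbar ∧ IsStatQ Q c P xbar ∧
       ∃ ε > (0:ℝ), ∀ y, IsStatQ Q c P y → n2 (y - xbar) < ε → y = xbar)
      ↔ IsIsolatedLocMin (quadF Q c α) P xbar) ∧
    -- (a4) ↔ (a5): strict local minimizer
    (IsIsolatedLocMin (quadF Q c α) P xbar ↔ IsStrictLocMin (quadF Q c α) P xbar) ∧
    -- (a5) ↔ (a6): strong local minimizer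
    (IsStrictLocMin (quadF Q c α) P xbar ↔ IsStrongLocMin (quadF Q c α) P xbar) := by
  subst hP
  subst hC
  have hPeq : {x | ∀ i, b i ≤ ∑ j, A i j * x j} = PolyP A b := rfl
  rw [hPeq] at hxbar ⊢
  have hCeq : {v | v ∈ TangentCone (PolyP A b) xbar ∧ (∑ i, gradQ Q c xbar i * v i) = 0}
      = Cset Q c A b xbar := rfl
  rw [hCeq]
  set CC := Cset Q c A b xbar with hCC
  -- abbreviations for the six statements
  set PP := PolyP A b with hPP
  -- basic implications
  have imp12 : (IsStatQ Q c PP xbar ∧ ∀ v ∈ CC, v ≠ 0 → 0 < ∑ i, ∑ j, Q i j * v i * v j) →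
      (IsStatQ Q c PP xbar ∧ (∀ v ∈ CC, 0 ≤ ∑ i, ∑ j, Q i j * v i * v j) ∧
       (∀ v ∈ CC, (∑ i, v i * (∑ j, Q i j * v j)) = 0 →
         (∀ u ∈ CC, 0 ≤ ∑ i, (∑ j, Q i j * v j) * u i) → v = 0)) := by
    rintro ⟨hs, hstrict⟩
    refine ⟨hs, fun v hv => ?_, fun v hv h0 _ => ?_⟩
    · by_cases hc : v = 0
      · subst hc; simp
      · exact le_of_lt (hstrict v hv hc)
    · by_contra hne
      have h1 := hstrict v hv hne
      have h2 : QF Q v = 0 := by rw [← QF_eq_dot]; exact h0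
      exact absurd h1 (by rw [show (∑ i, ∑ j, Q i j * v i * v j) = QF Q v from rfl, h2]; norm_num)
  have imp21 : (IsStatQ Q c PP xbar ∧ (∀ v ∈ CC, 0 ≤ ∑ i, ∑ j, Q i j * v i * v j) ∧
       (∀ v ∈ CC, (∑ i, v i * (∑ j, Q i j * v j)) = 0 →
         (∀ u ∈ CC, 0 ≤ ∑ i, (∑ j, Q i j * v j) * u i) → v = 0)) →
      (IsStatQ Q c PP xbar ∧ ∀ v ∈ CC, v ≠ 0 → 0 < ∑ i, ∑ j, Q i j * v i * v j) := by
    rintro ⟨hs, hcop, hR0⟩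
    refine ⟨hs, ?_⟩
    apply copos_R0_to_strict hQ hxbar hcop
    intro v hv hQFv hdual
    exact hR0 v hv (by rw [QF_eq_dot]; exact hQFv) hdual
  have imp1strong : (IsStatQ Q c PP xbar ∧ ∀ v ∈ CC, v ≠ 0 → 0 < ∑ i, ∑ j, Q i j * v i * v j) →
      IsStrongLocMin (quadF Q c α) PP xbar := by
    rintro ⟨hs, hstrict⟩
    exact strict_to_strong hQ hs hstrict
  have imp23 : (IsStatQ Q c PP xbar ∧ (∀ v ∈ CC, 0 ≤ ∑ i, ∑ j, Q i j * v i * v j) ∧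
       (∀ v ∈ CC, (∑ i, v i * (∑ j, Q i j * v j)) = 0 →
         (∀ u ∈ CC, 0 ≤ ∑ i, (∑ j, Q i j * v j) * u i) → v = 0)) →
      (IsLocMin' (quadF Q c α) PP xbar ∧ IsStatQ Q c PP xbar ∧
       ∃ ε > (0:ℝ), ∀ y, IsStatQ Q c PP y → n2 (y - xbar) < ε → y = xbar) := by
    intro h2
    obtain ⟨hs, hcop, hR0⟩ := h2
    refine ⟨strong_to_loc (imp1strong (imp21 ⟨hs, hcop, hR0⟩)), hs, ?_⟩
    apply isolated_stat hQ hs hcop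
    intro v hv hQFv hdual
    exact hR0 v hv (by rw [QF_eq_dot]; exact hQFv) hdual
  have imp34 : (IsLocMin' (quadF Q c α) PP xbar ∧ IsStatQ Q c PP xbar ∧
       ∃ ε > (0:ℝ), ∀ y, IsStatQ Q c PP y → n2 (y - xbar) < ε → y = xbar) →
      IsIsolatedLocMin (quadF Q c α) PP xbar := by
    rintro ⟨hlm, _hs, ε, hε, hiso⟩
    refine ⟨hlm, ε, hε, fun y hy hyn => ?_⟩
    exact hiso y (locmin_stat hQ hy) hyn
  have imp45 : IsIsolatedLocMin (quadF Q c α) PP xbar → IsStrictLocMin (quadF Q c α) PP xbar :=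
    iso_to_strict
  have imp51 : IsStrictLocMin (quadF Q c α) PP xbar →
      (IsStatQ Q c PP xbar ∧ ∀ v ∈ CC, v ≠ 0 → 0 < ∑ i, ∑ j, Q i j * v i * v j) := by
    intro h5
    refine ⟨locmin_stat hQ (strict_to_loc h5), ?_⟩
    intro v hv hne
    exact strict_to_copos hQ h5 hv.1 hv.2 hne
  have imp43 : IsIsolatedLocMin (quadF Q c α) PP xbar →
      (IsLocMin' (quadF Q c α) PP xbar ∧ IsStatQ Q c PP xbar ∧
       ∃ ε > (0:ℝ), ∀ y, IsStatQ Q c PP y → n2 (y - xbar) < ε → y = xbar) :=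
    fun h4 => imp23 (imp12 (imp51 (imp45 h4)))
  refine ⟨⟨imp12, imp21⟩, ⟨imp23, fun h3 => imp12 (imp51 (imp45 (imp34 h3)))⟩,
    ⟨imp34, imp43⟩, ⟨imp45, fun h5 => imp34 (imp23 (imp12 (imp51 h5)))⟩,
    ⟨fun h5 => imp1strong (imp51 h5), strong_to_strict⟩⟩
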